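/- Let L be a frame. The frame of frame congruences on L is ultraparacompact: for every set S of frame congruences on L whose join is all of L × L (i.e. the frame congruence generated by ⋃S is L × L), there exists a set P of frame congruences on L such that (i) for any two distinct members p, q ∈ P, p ∩ q is the diagonal {(x,x) : x ∈ L}; (ii) the frame congruence generated by ⋃P is all of L × L; and (iii) every member of P is contained in some member of S. -/

import Mathlib

universe u

/-- A frame congruence on a frame `L`: an equivalence relation closed under
binary meets and arbitrary joins (pointwise). -/
def IsFrameCongruence {L : Type u} [Order.Frame L] (C : Set (L × L)) : Prop :=
  Equivalence (fun a b : L => (a, b) ∈ C) ∧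
    (∀ p q : L × L, p ∈ C → q ∈ C → (p.1 ⊓ q.1, p.2 ⊓ q.2) ∈ C) ∧
    ∀ S : Set (L × L), S ⊆ C → (sSup (Prod.fst '' S), sSup (Prod.snd '' S)) ∈ C

/-- The smallest frame congruence containing a relation `R`. -/
def frameCongGen {L : Type u} [Order.Frame L] (R : Set (L × L)) : Set (L × L) :=
  ⋂₀ {C | IsFrameCongruence C ∧ R ⊆ C}

namespace Plewe

variable {L : Type u} [Order.Frame L]

section Basics

variable {C D : Set (L × L)}

lemma mem_refl (h : IsFrameCongruence C) (x : L) : (x, x) ∈ C := h.1.refl x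

lemma mem_symm (h : IsFrameCongruence C) {x y : L} (hxy : (x, y) ∈ C) : (y, x) ∈ C :=
  h.1.symm hxy

lemma mem_trans (h : IsFrameCongruence C) {x y z : L} (h1 : (x, y) ∈ C) (h2 : (y, z) ∈ C) :
    (x, z) ∈ C := h.1.trans h1 h2

lemma mem_inf (h : IsFrameCongruence C) {a b x y : L} (h1 : (a, b) ∈ C) (h2 : (x, y) ∈ C) :
    (a ⊓ x, b ⊓ y) ∈ C := h.2.1 (a, b) (x, y) h1 h2

lemma mem_sup (h : IsFrameCongruence C) {a b x y : L} (h1 : (a, b) ∈ C) (h2 : (x, y) ∈ C) :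
    (a ⊔ x, b ⊔ y) ∈ C := by
  have := h.2.2 {(a, b), (x, y)} (by
    rintro p hp
    rcases hp with rfl | hp
    · exact h1
    · rcases hp with rfl; exact h2)
  rwa [Set.image_pair, Set.image_pair, sSup_pair, sSup_pair] at this

lemma mem_iSup (h : IsFrameCongruence C) {κ : Type*} (f : κ → L × L) (hf : ∀ k, f k ∈ C) :
    ((⨆ k, (f k).1, ⨆ k, (f k).2) : L × L) ∈ C := by
  have := h.2.2 (Set.range f) (by rintro p ⟨k, rfl⟩; exact hf k)
  rwa [← Set.range_comp, ← Set.range_comp, sSup_range, sSup_range] at this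

lemma mem_of_between (h : IsFrameCongruence C) {a b c : L} (hab : (a, b) ∈ C)
    (h1 : a ≤ c) (h2 : c ≤ b) : (a, c) ∈ C := by
  have := mem_inf h hab (mem_refl h c)
  rwa [inf_eq_left.mpr h1, inf_eq_right.mpr h2] at this

lemma inter_isCong (hC : IsFrameCongruence C) (hD : IsFrameCongruence D) :
    IsFrameCongruence (C ∩ D) := by
  refine ⟨⟨fun x => ⟨mem_refl hC x, mem_refl hD x⟩,
    fun h => ⟨mem_symm hC h.1, mem_symm hD h.2⟩,
    fun h1 h2 => ⟨mem_trans hC h1.1 h2.1, mem_trans hD h1.2 h2.2⟩⟩, ?_, ?_⟩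
  · intro p q hp hq
    exact ⟨hC.2.1 p q hp.1 hq.1, hD.2.1 p q hp.2 hq.2⟩
  · intro U hU
    exact ⟨hC.2.2 U (fun p hp => (hU hp).1), hD.2.2 U (fun p hp => (hU hp).2)⟩

/-- `x` is saturated for `C`: everything `C`-related to `x` lies below `x`. -/
def Saturated (C : Set (L × L)) (x : L) : Prop := ∀ w, (x, w) ∈ C → w ≤ x

lemma Saturated.anti (hCD : C ⊆ D) {x : L} (h : Saturated D x) : Saturated C x :=
  fun w hw => h w (hCD hw)

lemma saturated_sInf (hC : IsFrameCongruence C) {F : Set L} (hF : ∀ y ∈ F, Saturated C y) :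
    Saturated C (sInf F) := by
  intro w hw
  refine le_sInf fun y hy => ?_
  have h1 : ((y ⊔ sInf F, y ⊔ w) : L × L) ∈ C := mem_sup hC (mem_refl hC y) hw
  rw [sup_eq_left.mpr (sInf_le hy)] at h1
  exact le_trans le_sup_right (hF y hy _ h1)

lemma saturated_himp (hC : IsFrameCongruence C) {z : L} (u : L) (h : Saturated C z) :
    Saturated C (u ⇨ z) := by
  intro w hw
  have h1 : ((u ⊓ (u ⇨ z), u ⊓ w) : L × L) ∈ C := mem_inf hC (mem_refl hC u) hw
  rw [inf_himp] at h1
  have h2 : ((z ⊔ u ⊓ z, z ⊔ u ⊓ w) : L × L) ∈ C := mem_sup hC (mem_refl hC z) h1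
  rw [sup_eq_left.mpr inf_le_right] at h2
  have h3 : z ⊔ u ⊓ w ≤ z := h _ h2
  rw [le_himp_iff]
  rw [inf_comm]
  exact le_trans le_sup_right h3

end Basics

section KMach

variable {κ : Type*} 

/-- Join-closure operator for a family of congruences. -/
noncomputable def Kmap (fam : κ → Set (L × L)) (x : L) : L :=
  sInf {y | x ≤ y ∧ ∀ k, Saturated (fam k) y}

variable {fam : κ → Set (L × L)}

lemma le_Kmap (x : L) : x ≤ Kmap fam x := le_sInf fun _ hy => hy.1

lemma Kmap_mono {x y : L} (h : x ≤ y) : Kmap fam x ≤ Kmap fam y :=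
  sInf_le_sInf fun z hz => ⟨h.trans hz.1, hz.2⟩

lemma Kmap_le {x y : L} (h1 : x ≤ y) (h2 : ∀ k, Saturated (fam k) y) : Kmap fam x ≤ y :=
  sInf_le ⟨h1, h2⟩

lemma Kmap_sat (hfam : ∀ k, IsFrameCongruence (fam k)) (x : L) (k : κ) :
    Saturated (fam k) (Kmap fam x) :=
  saturated_sInf (hfam k) fun _ hy => hy.2 k

lemma Kmap_idem (hfam : ∀ k, IsFrameCongruence (fam k)) (x : L) :
    Kmap fam (Kmap fam x) = Kmap fam x :=
  le_antisymm (Kmap_le le_rfl (Kmap_sat hfam x)) (le_Kmap _)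

lemma Kmap_inf (hfam : ∀ k, IsFrameCongruence (fam k)) (x y : L) :
    Kmap fam (x ⊓ y) = Kmap fam x ⊓ Kmap fam y := by
  refine le_antisymm (le_inf (Kmap_mono inf_le_left) (Kmap_mono inf_le_right)) ?_
  refine le_sInf fun z hz => ?_
  obtain ⟨hz1, hz2⟩ := hz
  have hx : x ≤ y ⇨ z := le_himp_iff.mpr hz1
  have hKx : Kmap fam x ≤ y ⇨ z :=
    Kmap_le hx fun k => saturated_himp (hfam k) y (hz2 k)
  have hy : y ≤ Kmap fam x ⇨ z := by
    rw [le_himp_iff, inf_comm]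
    exact le_himp_iff.mp hKx
  have hKy : Kmap fam y ≤ Kmap fam x ⇨ z :=
    Kmap_le hy fun k => saturated_himp (hfam k) _ (hz2 k)
  have := le_himp_iff.mp hKy
  rw [inf_comm]
  exact this
  
/-- The congruence induced by the closure operator of a family. -/
noncomputable def congOfK (fam : κ → Set (L × L)) : Set (L × L) :=
  {p | Kmap fam p.1 = Kmap fam p.2}

lemma congOfK_isCong (hfam : ∀ k, IsFrameCongruence (fam k)) :
    IsFrameCongruence (congOfK fam) := by
  refine ⟨⟨fun x => rfl, fun h => h.symm, fun h1 h2 => h1.trans h2⟩, ?_, ?_⟩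
  · rintro ⟨a, b⟩ ⟨x, y⟩ (h1 : _ = _) (h2 : _ = _)
    show Kmap fam (a ⊓ x) = Kmap fam (b ⊓ y)
    rw [Kmap_inf hfam, Kmap_inf hfam, h1, h2]
  · intro T hT
    show Kmap fam (sSup (Prod.fst '' T)) = Kmap fam (sSup (Prod.snd '' T))
    have key : ∀ (f g : (L × L) → L), (∀ p ∈ T, Kmap fam (f p) = Kmap fam (g p)) →
        Kmap fam (sSup (f '' T)) ≤ Kmap fam (sSup (g '' T)) := by
      intro f g hfg
      have h1 : sSup (f '' T) ≤ Kmap fam (sSup (g '' T)) := by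
        refine sSup_le ?_
        rintro a ⟨p, hp, rfl⟩
        calc f p ≤ Kmap fam (f p) := le_Kmap _
          _ = Kmap fam (g p) := hfg p hp
          _ ≤ Kmap fam (sSup (g '' T)) := Kmap_mono (le_sSup ⟨p, hp, rfl⟩)
      calc Kmap fam (sSup (f '' T)) ≤ Kmap fam (Kmap fam (sSup (g '' T))) := Kmap_mono h1
        _ = Kmap fam (sSup (g '' T)) := Kmap_idem hfam _
    exact le_antisymm (key _ _ fun p hp => hT hp) (key _ _ fun p hp => (hT hp : Kmap fam p.1 = _).symm)

lemma fam_subset_congOfK (hfam : ∀ k, IsFrameCongruence (fam k)) (k : κ) :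
    fam k ⊆ congOfK fam := by
  rintro ⟨a, b⟩ hab
  show Kmap fam a = Kmap fam b
  have key : ∀ x y : L, ((x, y) : L × L) ∈ fam k → x ≤ Kmap fam y := by
    intro x y hxy
    have h1 : ((Kmap fam y ⊔ x, Kmap fam y ⊔ y) : L × L) ∈ fam k :=
      mem_sup (hfam k) (mem_refl (hfam k) _) hxy
    rw [sup_eq_left.mpr (le_Kmap y)] at h1
    have h2 := Kmap_sat hfam y k _ (mem_symm (hfam k) h1)
    exact le_trans le_sup_right h2
  refine le_antisymm ?_ ?_
  · exact (Kmap_le (key a b hab) (Kmap_sat hfam b)).trans le_rfl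
  · exact (Kmap_le (key b a (mem_symm (hfam k) hab)) (Kmap_sat hfam a)).trans le_rfl

/-- class-maximum map of a congruence -/
noncomputable def nuMap (C : Set (L × L)) (x : L) : L := sSup {w | (x, w) ∈ C}

lemma le_nuMap {C : Set (L × L)} {x w : L} (h : (x, w) ∈ C) : w ≤ nuMap C x := le_sSup h

lemma self_le_nuMap (hC : IsFrameCongruence C) (x : L) : x ≤ nuMap C x :=
  le_nuMap (mem_refl hC x)

lemma mem_nuMap (hC : IsFrameCongruence C) (x : L) : (x, nuMap C x) ∈ C := by
  have := hC.2.2 {p | p ∈ C ∧ p.1 = x} (fun p hp => hp.1)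
  have h1 : Prod.fst '' {p : L × L | p ∈ C ∧ p.1 = x} = {x} := by
    apply Set.eq_singleton_iff_unique_mem.mpr
    constructor
    · exact ⟨(x, x), ⟨mem_refl hC x, rfl⟩, rfl⟩
    · rintro a ⟨p, hp, rfl⟩; exact hp.2
  have h2 : Prod.snd '' {p : L × L | p ∈ C ∧ p.1 = x} = {w | (x, w) ∈ C} := by
    ext w
    constructor
    · rintro ⟨⟨p1, p2⟩, ⟨hp, rfl⟩, rfl⟩; exact hp
    · intro hw; exact ⟨(x, w), ⟨hw, rfl⟩, rfl⟩
  rw [h1, h2, sSup_singleton] at this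
  exact this

lemma saturated_nuMap (hC : IsFrameCongruence C) (x : L) : Saturated C (nuMap C x) :=
  fun w hw => le_nuMap (mem_trans hC (mem_nuMap hC x) hw)

lemma congOfK_subset (hfam : ∀ k, IsFrameCongruence (fam k)) {G : Set (L × L)}
    (hG : IsFrameCongruence G) (hsub : ∀ k, fam k ⊆ G) : congOfK fam ⊆ G := by
  have hmem : ∀ x : L, (x, Kmap fam x) ∈ G := by
    intro x
    have h1 : Kmap fam x ≤ nuMap G x := by
      refine Kmap_le (self_le_nuMap hG x) fun k => ?_
      exact (saturated_nuMap hG x).anti (hsub k)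
    exact mem_of_between hG (mem_nuMap hG x) (le_Kmap x) h1
  rintro ⟨a, b⟩ (hab : Kmap fam a = Kmap fam b)
  refine mem_trans hG (hmem a) ?_
  rw [hab]
  exact mem_symm hG (hmem b)

end KMach

section Gen

variable {C D R : Set (L × L)}

lemma frameCongGen_isCong (R : Set (L × L)) : IsFrameCongruence (frameCongGen R) := by
  refine ⟨⟨fun x C hC => mem_refl hC.1 x, fun h C hC => mem_symm hC.1 (h C hC),
    fun h1 h2 C hC => mem_trans hC.1 (h1 C hC) (h2 C hC)⟩, ?_, ?_⟩
  · intro p q hp hq C hC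
    exact hC.1.2.1 p q (hp C hC) (hq C hC)
  · intro T hT C hC
    exact hC.1.2.2 T fun p hp => hT hp C hC

lemma subset_frameCongGen (R : Set (L × L)) : R ⊆ frameCongGen R :=
  fun p hp C hC => hC.2 hp

lemma frameCongGen_le (hC : IsFrameCongruence C) (h : R ⊆ C) : frameCongGen R ⊆ C :=
  Set.sInter_subset_of_mem ⟨hC, h⟩

variable {κ : Type*} {fam : κ → Set (L × L)}

lemma gen_eq_congOfK (hfam : ∀ k, IsFrameCongruence (fam k)) :
    frameCongGen (⋃ k, fam k) = congOfK fam := by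
  refine le_antisymm ?_ ?_
  · exact frameCongGen_le (congOfK_isCong hfam) (Set.iUnion_subset (fam_subset_congOfK hfam))
  · exact congOfK_subset hfam (frameCongGen_isCong _)
      (fun k => (Set.subset_iUnion fam k).trans (subset_frameCongGen _))

lemma eq_univ_of_bot_top (hC : IsFrameCongruence C) (h : ((⊥ : L), (⊤ : L)) ∈ C) :
    C = Set.univ := by
  have key : ∀ x : L, ((x, ⊤) : L × L) ∈ C := by
    intro x
    have := mem_sup hC (mem_refl hC x) h
    rwa [sup_bot_eq, sup_top_eq] at this
  refine Set.eq_univ_of_forall ?_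
  rintro ⟨x, y⟩
  exact mem_trans hC (key x) (mem_symm hC (key y))

lemma gen_eq_univ_of_sat (hfam : ∀ k, IsFrameCongruence (fam k))
    (h : ∀ x : L, (∀ k, Saturated (fam k) x) → x = ⊤) :
    frameCongGen (⋃ k, fam k) = Set.univ := by
  rw [gen_eq_congOfK hfam]
  refine eq_univ_of_bot_top (congOfK_isCong hfam) ?_
  show Kmap fam ⊥ = Kmap fam ⊤
  have h1 : Kmap fam ⊥ = ⊤ := h _ (fun k => Kmap_sat hfam ⊥ k)
  have h2 : Kmap fam ⊤ = ⊤ := le_antisymm le_top (le_Kmap ⊤)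
  rw [h1, h2]

lemma sat_top_of_gen_univ (hfam : ∀ k, IsFrameCongruence (fam k))
    (hU : frameCongGen (⋃ k, fam k) = Set.univ) {x : L}
    (hx : ∀ k, Saturated (fam k) x) : x = ⊤ := by
  have hKx : Kmap fam x = x := le_antisymm (Kmap_le le_rfl hx) (le_Kmap x)
  have h1 : Saturated (congOfK fam) x := by
    intro w hw
    have : Kmap fam x = Kmap fam w := hw
    calc w ≤ Kmap fam w := le_Kmap w
      _ = Kmap fam x := this.symm
      _ = x := hKx
  have h2 : Saturated (frameCongGen (⋃ k, fam k)) x := by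
    rw [gen_eq_congOfK hfam]; exact h1
  rw [hU] at h2
  exact le_antisymm le_top (h2 ⊤ trivial)

/-- two congruences version -/
lemma gen_pair_eq_univ (hC : IsFrameCongruence C) (hD : IsFrameCongruence D)
    (h : ∀ x : L, Saturated C x → Saturated D x → x = ⊤) :
    frameCongGen (C ∪ D) = Set.univ := by
  rw [Set.union_eq_iUnion]
  refine gen_eq_univ_of_sat (fun b => ?_) (fun x hx => h x (hx true) (hx false))
  cases b <;> simpa

end Gen

section FrameLaw

variable {A C D : Set (L × L)}

/-- Binary frame distributivity for frame congruences. -/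
lemma frame_law (hA : IsFrameCongruence A) (hC : IsFrameCongruence C)
    (hD : IsFrameCongruence D) :
    A ∩ frameCongGen (C ∪ D) ⊆ frameCongGen ((A ∩ C) ∪ (A ∩ D)) := by
  classical
  set fam2 : Bool → Set (L × L) := fun b => cond b C D with hfam2def
  set famI : Bool → Set (L × L) := fun b => A ∩ cond b C D with hfamIdef
  have hfam2 : ∀ b, IsFrameCongruence (fam2 b) := by intro b; cases b <;> simpa [fam2]
  have hinter : ∀ b, IsFrameCongruence (famI b) := by
    intro b
    have h2 := hfam2 b
    refine ⟨⟨fun x => ⟨mem_refl hA x, mem_refl h2 x⟩,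
      fun h => ⟨mem_symm hA h.1, mem_symm h2 h.2⟩,
      fun h1 h2' => ⟨mem_trans hA h1.1 h2'.1, mem_trans h2 h1.2 h2'.2⟩⟩, ?_, ?_⟩
    · intro p q hp hq
      exact ⟨hA.2.1 p q hp.1 hq.1, (hfam2 b).2.1 p q hp.2 hq.2⟩
    · intro T hT
      exact ⟨hA.2.2 T (fun p hp => (hT hp).1), (hfam2 b).2.2 T (fun p hp => (hT hp).2)⟩
  have key : ∀ x y : L, ((x, y) : L × L) ∈ A → Kmap fam2 x = Kmap fam2 y →
      y ≤ Kmap famI x := by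
    intro x y hxyA hK
    set n : L := nuMap A x with hn
    set kx : L := Kmap famI x with hkx
    have hxn : ((x, n) : L × L) ∈ A := mem_nuMap hA x
    have hsatw : ∀ b : Bool, Saturated (fam2 b) (n ⇨ kx) := by
      intro b w hw
      have h1 : ((n ⊓ (n ⇨ kx), n ⊓ w) : L × L) ∈ fam2 b :=
        mem_inf (hfam2 b) (mem_refl (hfam2 b) n) hw
      rw [inf_himp] at h1
      have h2 : ((kx ⊔ n ⊓ kx, kx ⊔ n ⊓ w) : L × L) ∈ fam2 b :=
        mem_sup (hfam2 b) (mem_refl (hfam2 b) kx) h1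
      rw [sup_eq_left.mpr inf_le_right] at h2
      have h3 : ((kx ⊔ x, kx ⊔ n) : L × L) ∈ A := mem_sup hA (mem_refl hA kx) hxn
      rw [sup_eq_left.mpr (le_Kmap x)] at h3
      have h4 : ((kx ⊓ (kx ⊔ n ⊓ w), (kx ⊔ n) ⊓ (kx ⊔ n ⊓ w)) : L × L) ∈ A :=
        mem_inf hA h3 (mem_refl hA _)
      have e1 : kx ⊓ (kx ⊔ n ⊓ w) = kx := inf_eq_left.mpr le_sup_left
      have e2 : (kx ⊔ n) ⊓ (kx ⊔ n ⊓ w) = kx ⊔ n ⊓ w := by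
        rw [← sup_inf_left, ← inf_assoc, inf_idem]
      rw [e1, e2] at h4
      have h5 : Saturated (famI b) kx := Kmap_sat hinter x b
      have h6 : kx ⊔ n ⊓ w ≤ kx := h5 _ ⟨h4, h2⟩
      rw [le_himp_iff, inf_comm]
      exact le_trans le_sup_right h6
    have hxw : x ≤ n ⇨ kx := by
      rw [le_himp_iff]
      exact inf_le_left.trans (le_Kmap x)
    have hKle : Kmap fam2 x ≤ n ⇨ kx := Kmap_le hxw hsatw
    have hyn : y ≤ n := le_nuMap hxyA
    have hyK : y ≤ Kmap fam2 x := by rw [hK]; exact le_Kmap y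
    calc y ≤ n ⊓ (n ⇨ kx) := le_inf hyn (hyK.trans hKle)
      _ = n ⊓ kx := inf_himp n kx
      _ ≤ kx := inf_le_right
  rintro ⟨x, y⟩ ⟨hxyA, hxyG⟩
  have hG : frameCongGen (C ∪ D) = congOfK fam2 := by
    rw [Set.union_eq_iUnion]; exact gen_eq_congOfK hfam2
  have hKxy : Kmap fam2 x = Kmap fam2 y := by
    have := hxyG; rw [hG] at this; exact this
  have h1 : y ≤ Kmap famI x := key x y hxyA hKxy
  have h2 : x ≤ Kmap famI y := key y x (mem_symm hA hxyA) hKxy.symm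
  have hk : Kmap famI x = Kmap famI y := by
    refine le_antisymm ?_ ?_
    · calc Kmap famI x ≤ Kmap famI (Kmap famI y) := Kmap_mono h2
        _ = Kmap famI y := Kmap_idem hinter y
    · calc Kmap famI y ≤ Kmap famI (Kmap famI x) := Kmap_mono h1
        _ = Kmap famI x := Kmap_idem hinter x
  have hU : A ∩ C ∪ A ∩ D = ⋃ b, famI b := by
    rw [Set.union_eq_iUnion]
    exact Set.iUnion_congr fun b => by cases b <;> rfl
  rw [hU, gen_eq_congOfK hinter]
  exact hk

end FrameLaw

section OpenClosed

/-- Open congruence. -/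
def delta (a : L) : Set (L × L) := {p | p.1 ⊓ a = p.2 ⊓ a}

/-- Closed congruence. -/
def nabla (a : L) : Set (L × L) := {p | p.1 ⊔ a = p.2 ⊔ a}

lemma delta_isCong (a : L) : IsFrameCongruence (delta (L := L) a) := by
  refine ⟨⟨fun x => rfl, fun h => h.symm, fun h1 h2 => h1.trans h2⟩, ?_, ?_⟩
  · rintro ⟨x, y⟩ ⟨x', y'⟩ (h1 : _ = _) (h2 : _ = _)
    show (x ⊓ x') ⊓ a = (y ⊓ y') ⊓ a
    rw [inf_inf_distrib_right, h1, h2, ← inf_inf_distrib_right]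
  · intro T hT
    show sSup (Prod.fst '' T) ⊓ a = sSup (Prod.snd '' T) ⊓ a
    rw [sSup_inf_eq, sSup_inf_eq, iSup_image, iSup_image]
    exact iSup_congr fun p => iSup_congr fun hp => hT hp
  
lemma nabla_isCong (a : L) : IsFrameCongruence (nabla (L := L) a) := by
  refine ⟨⟨fun x => rfl, fun h => h.symm, fun h1 h2 => h1.trans h2⟩, ?_, ?_⟩
  · rintro ⟨x, y⟩ ⟨x', y'⟩ (h1 : _ = _) (h2 : _ = _)
    show (x ⊓ x') ⊔ a = (y ⊓ y') ⊔ a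
    rw [sup_comm _ a, sup_inf_left, sup_comm a x, sup_comm a x', h1, h2,
      ← sup_comm a y, ← sup_comm a y', ← sup_inf_left, sup_comm a]
  · intro T hT
    show sSup (Prod.fst '' T) ⊔ a = sSup (Prod.snd '' T) ⊔ a
    have key : ∀ (f g : (L × L) → L), (∀ p ∈ T, f p ⊔ a = g p ⊔ a) →
        sSup (f '' T) ⊔ a ≤ sSup (g '' T) ⊔ a := by
      intro f g hfg
      refine sup_le (sSup_le ?_) le_sup_right
      rintro z ⟨p, hp, rfl⟩
      calc f p ≤ f p ⊔ a := le_sup_left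
        _ = g p ⊔ a := hfg p hp
        _ ≤ sSup (g '' T) ⊔ a := sup_le_sup_right (le_sSup (Set.mem_image_of_mem g hp)) a
    exact le_antisymm (key _ _ fun p hp => hT hp) (key _ _ fun p hp => (hT hp : p.1 ⊔ a = _).symm)

lemma delta_anti {a b : L} (h : a ≤ b) : delta (L := L) b ⊆ delta a := by
  rintro ⟨x, y⟩ (hxy : _ = _)
  show x ⊓ a = y ⊓ a
  calc x ⊓ a = (x ⊓ b) ⊓ a := by rw [inf_assoc, inf_eq_right.mpr h]
    _ = (y ⊓ b) ⊓ a := by rw [hxy]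
    _ = y ⊓ a := by rw [inf_assoc, inf_eq_right.mpr h]

lemma nabla_inter_delta (a : L) : nabla (L := L) a ∩ delta a = Set.diagonal L := by
  ext ⟨x, y⟩
  constructor
  · rintro ⟨(h1 : _ = _), (h2 : _ = _)⟩
    exact eq_of_inf_eq_sup_eq h2 h1
  · rintro (h : x = y)
    subst h
    exact ⟨rfl, rfl⟩

lemma mem_bot_nabla (a : L) : ((⊥ : L), a) ∈ nabla (L := L) a := by
  show ⊥ ⊔ a = a ⊔ a
  rw [bot_sup_eq, sup_idem]

lemma nabla_subset_of_bot_mem {Q : Set (L × L)} (hQ : IsFrameCongruence Q) {a : L}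
    (h : ((⊥ : L), a) ∈ Q) : nabla a ⊆ Q := by
  rintro ⟨x, y⟩ (hxy : x ⊔ a = y ⊔ a)
  have hx : ((x, x ⊔ a) : L × L) ∈ Q := by
    have := mem_sup hQ (mem_refl hQ x) h
    rwa [sup_bot_eq] at this
  have hy : ((y, y ⊔ a) : L × L) ∈ Q := by
    have := mem_sup hQ (mem_refl hQ y) h
    rwa [sup_bot_eq] at this
  rw [hxy] at hx
  exact mem_trans hQ hx (mem_symm hQ hy)

/-- The congruence generated by open+closed pair on the same element is everything. -/
lemma gen_delta_nabla (a : L) :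
    frameCongGen (delta (L := L) a ∪ nabla a) = Set.univ := by
  refine gen_pair_eq_univ (delta_isCong a) (nabla_isCong a) ?_
  intro x hd hn
  have h1 : ((x, x ⊔ a) : L × L) ∈ nabla a := by
    show x ⊔ a = (x ⊔ a) ⊔ a
    rw [sup_assoc, sup_idem]
  have h2 : a ≤ x := le_sup_right.trans (hn _ h1)
  have h3 : ((x, ⊤) : L × L) ∈ delta a := by
    show x ⊓ a = ⊤ ⊓ a
    rw [inf_eq_right.mpr h2, top_inf_eq]
  exact le_antisymm le_top (hd _ h3)

/-- principal congruence pieces are inside the congruence. -/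
lemma theta_subset {s : Set (L × L)} (hs : IsFrameCongruence s) {c d : L}
    (hcd : (c, d) ∈ s) : delta c ∩ nabla d ⊆ s := by
  rintro ⟨x, y⟩ ⟨(hc : x ⊓ c = y ⊓ c), (hd : x ⊔ d = y ⊔ d)⟩
  have h1 : ((y ⊓ c, y ⊓ d) : L × L) ∈ s := mem_inf hs (mem_refl hs y) hcd
  rw [← hc] at h1
  have h2 : ((x ⊔ x ⊓ c, x ⊔ y ⊓ d) : L × L) ∈ s := mem_sup hs (mem_refl hs x) h1
  rw [sup_inf_self] at h2
  have h1' : ((x ⊓ c, x ⊓ d) : L × L) ∈ s := mem_inf hs (mem_refl hs x) hcd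
  rw [hc] at h1'
  have h3 : ((y ⊔ y ⊓ c, y ⊔ x ⊓ d) : L × L) ∈ s := mem_sup hs (mem_refl hs y) h1'
  rw [sup_inf_self] at h3
  have key : x ⊔ y ⊓ d = y ⊔ x ⊓ d := by
    rw [sup_inf_left, sup_inf_left, hd, sup_comm x y]
  rw [key] at h2
  exact mem_trans hs h2 (mem_symm hs h3)

end OpenClosed

section Bootstrap

variable (T : Set (L × L))

/-- one-step closure of the reachable region -/
def Phi (E : L) : L := E ⊔ sSup {q | ∃ c, (c, q) ∈ T ∧ c ≤ E}

lemma Phi_mono {E E' : L} (h : E ≤ E') : Phi T E ≤ Phi T E' := by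
  refine sup_le_sup h (sSup_le_sSup ?_)
  rintro q ⟨c, hc, hce⟩
  exact ⟨c, hc, hce.trans h⟩

/-- transfinite iteration of `Phi` -/
noncomputable def approx : Ordinal.{u} → L :=
  fun o => sSup {z | ∃ o' : Ordinal.{u}, ∃ _ : o' < o, z = Phi T (approx o')}
termination_by o => o
decreasing_by exact ‹_›

lemma approx_mono {o₁ o₂ : Ordinal.{u}} (h : o₁ ≤ o₂) : approx T o₁ ≤ approx T o₂ := by
  rw [approx, approx]
  refine sSup_le_sSup ?_
  rintro z ⟨o', ho', rfl⟩
  exact ⟨o', ho'.trans_le h, rfl⟩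

lemma Phi_approx_le {o' o : Ordinal.{u}} (h : o' < o) : Phi T (approx T o') ≤ approx T o := by
  conv_rhs => rw [approx]
  exact le_sSup ⟨o', h, rfl⟩

/-- index type for the partition: reachable ordered pairs -/
def GoodIdx : Type u := {p : L × L // p ∈ T ∧ ∃ o : Ordinal.{u}, p.1 ≤ approx T o}

/-- rank of a good pair -/
noncomputable def rho (t : GoodIdx T) : Ordinal.{u} := sInf {o | t.1.1 ≤ approx T o}

lemma le_approx_rho (t : GoodIdx T) : t.1.1 ≤ approx T (rho T t) := csInf_mem t.2.2

lemma rho_le {t : GoodIdx T} {o : Ordinal.{u}} (h : t.1.1 ≤ approx T o) : rho T t ≤ o :=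
  csInf_le' h

/-- the well-order on good pairs -/
noncomputable def grel (t u : GoodIdx T) : Prop :=
  rho T t < rho T u ∨ (rho T t = rho T u ∧ WellOrderingRel t u)

lemma grel_wf : WellFounded (grel T) := by
  have hlex : WellFounded (Prod.Lex ((· < ·) : Ordinal.{u} → Ordinal.{u} → Prop)
      (WellOrderingRel : GoodIdx T → GoodIdx T → Prop)) :=
    WellFounded.prod_lex Ordinal.lt_wf IsWellFounded.wf
  have hinv := InvImage.wf (fun t : GoodIdx T => ((rho T t, t) : Ordinal.{u} × GoodIdx T)) hlex
  refine Subrelation.wf ?_ hinv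
  rintro t u (h | ⟨h1, h2⟩)
  · exact Prod.Lex.left _ _ h
  · dsimp [InvImage]
    rw [h1]
    exact Prod.Lex.right _ h2

lemma grel_connex {t u : GoodIdx T} (h : t ≠ u) : grel T t u ∨ grel T u t := by
  rcases lt_trichotomy (rho T t) (rho T u) with h1 | h1 | h1
  · exact Or.inl (Or.inl h1)
  · rcases trichotomous_of (WellOrderingRel : GoodIdx T → GoodIdx T → Prop) t u with h2 | h2 | h2
    · exact Or.inl (Or.inr ⟨h1, h2⟩)
    · exact absurd h2 h
    · exact Or.inr (Or.inr ⟨h1.symm, h2⟩)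
  · exact Or.inr (Or.inl h1)

/-- accumulated join of earlier pieces -/
noncomputable def ee (t : GoodIdx T) : L := ⨆ u : GoodIdx T, ⨆ _ : grel T u t, u.1.2

lemma d_le_ee {t u : GoodIdx T} (h : grel T u t) : u.1.2 ≤ ee T t := by
  exact le_iSup₂ (f := fun (u : GoodIdx T) (_ : grel T u t) => u.1.2) u h

lemma approx_le_Z (o : Ordinal.{u}) :
    approx T o ≤ ⨆ u : GoodIdx T, ⨆ _ : rho T u < o, u.1.2 := by
  induction o using Ordinal.induction with
  | h o IH =>
    rw [approx]
    refine sSup_le ?_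
    rintro z ⟨o', ho', rfl⟩
    refine sup_le ?_ ?_
    · refine (IH o' ho').trans ?_
      exact iSup₂_le fun u h =>
        le_iSup₂ (f := fun (u : GoodIdx T) (_ : rho T u < o) => u.1.2) u (h.trans ho')
    · refine sSup_le ?_
      rintro q ⟨c, hcq, hce⟩
      have hgood : (c, q) ∈ T ∧ ∃ o'' : Ordinal.{u}, ((c, q) : L × L).1 ≤ approx T o'' :=
        ⟨hcq, ⟨o', hce⟩⟩
      have hrho : rho T ⟨(c, q), hgood⟩ ≤ o' := rho_le T hce
      exact le_iSup₂ (f := fun (u : GoodIdx T) (_ : rho T u < o) => u.1.2)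
        ⟨(c, q), hgood⟩ (hrho.trans_lt ho')

lemma c_le_ee (t : GoodIdx T) : t.1.1 ≤ ee T t := by
  refine (le_approx_rho T t).trans ((approx_le_Z T (rho T t)).trans ?_)
  exact iSup₂_le fun u h =>
    le_iSup₂ (f := fun (u : GoodIdx T) (_ : grel T u t) => u.1.2) u (Or.inl h)

/-- the partition pieces -/
noncomputable def PP (t : GoodIdx T) : Set (L × L) := delta (ee T t) ∩ nabla t.1.2

lemma PP_isCong (t : GoodIdx T) : IsFrameCongruence (PP T t) :=
  inter_isCong (delta_isCong _) (nabla_isCong _)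

end Bootstrap

end Plewe


open Plewe in
/-- The congruence frame of a frame is ultraparacompact: every cover of the
frame of frame congruences is refined by a partition. -/
theorem congruence_frame_ultraparacompact {L : Type u} [Order.Frame L]
    (S : Set (Set (L × L))) (hS : ∀ s ∈ S, IsFrameCongruence s)
    (hcov : frameCongGen (⋃₀ S) = Set.univ) :
    ∃ P : Set (Set (L × L)),
      (∀ p ∈ P, IsFrameCongruence p) ∧
      (∀ p ∈ P, ∀ q ∈ P, p ≠ q → p ∩ q = Set.diagonal L) ∧
      frameCongGen (⋃₀ P) = Set.univ ∧
      ∀ p ∈ P, ∃ s ∈ S, p ⊆ s := by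
  classical
  set TT : Set (L × L) := {p | p.1 ≤ p.2 ∧ ∃ s ∈ S, p ∈ s} with hTTdef
  have hfamS : ∀ s : ↥S, IsFrameCongruence (s : Set (L × L)) := fun s => hS s s.2
  have hcov' : frameCongGen (⋃ s : ↥S, (s : Set (L × L))) = Set.univ := by
    rwa [← Set.sUnion_eq_iUnion]
  have crit : ∀ x : L, (∀ s : ↥S, Saturated (s : Set (L × L)) x) → x = ⊤ :=
    fun x hx => sat_top_of_gen_univ hfamS hcov' hx
  -- the join of all reachable pieces is the top element
  set E : L := ⨆ t : GoodIdx TT, t.1.2 with hEdef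
  have hpre : ∀ p : L × L, p ∈ TT → p.1 ≤ E → p.2 ≤ E := by
    intro p hp hle
    set O : Ordinal.{u} := ⨆ t : GoodIdx TT, Order.succ (rho TT t) with hOdef
    have hd : ∀ t : GoodIdx TT, t.1.2 ≤ approx TT O := by
      intro t
      have h1 : t.1.2 ≤ Phi TT (approx TT (rho TT t)) := by
        refine le_trans (le_sSup ?_) le_sup_right
        exact ⟨t.1.1, t.2.1, le_approx_rho TT t⟩
      refine h1.trans (Phi_approx_le TT ?_)
      exact lt_of_lt_of_le (Order.lt_succ _)
        (le_ciSup (Ordinal.bddAbove_range _) t)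
    have hEO : E ≤ approx TT O := iSup_le hd
    exact le_iSup (fun t : GoodIdx TT => t.1.2) ⟨p, hp, O, hle.trans hEO⟩
  have hEtop : E = ⊤ := by
    refine crit E fun s => ?_
    intro w hw
    have h2 : ((E ⊔ E, E ⊔ w) : L × L) ∈ (s : Set (L × L)) :=
      mem_sup (hfamS s) (mem_refl (hfamS s) E) hw
    rw [sup_idem] at h2
    have hmem : ((E, E ⊔ w) : L × L) ∈ TT := ⟨le_sup_left, s, s.2, h2⟩
    exact le_trans le_sup_right (hpre _ hmem le_rfl)
  refine ⟨Set.range (fun t : GoodIdx TT => PP TT t), ?_, ?_, ?_, ?_⟩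
  · rintro p ⟨t, rfl⟩
    exact PP_isCong TT t
  · -- pairwise disjointness
    have keydisj : ∀ t u : GoodIdx TT, grel TT u t → PP TT t ∩ PP TT u = Set.diagonal L := by
      intro t u hrel
      refine le_antisymm ?_ ?_
      · rintro ⟨x, y⟩ ⟨⟨hd1, _hn1⟩, ⟨_hd2, hn2⟩⟩
        have h1 : ((x, y) : L × L) ∈ delta u.1.2 := delta_anti (d_le_ee TT hrel) hd1
        rw [← nabla_inter_delta u.1.2]
        exact ⟨hn2, h1⟩
      · rintro ⟨x, y⟩ (h : x = y)
        subst h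
        exact ⟨⟨rfl, rfl⟩, ⟨rfl, rfl⟩⟩
    rintro p ⟨t, rfl⟩ q ⟨u, rfl⟩ hne
    have htu : t ≠ u := by rintro rfl; exact hne rfl
    rcases grel_connex TT htu with h | h
    · rw [Set.inter_comm]
      exact keydisj u t h
    · exact keydisj t u h
  · -- cover
    set Q := frameCongGen (⋃₀ Set.range (fun t : GoodIdx TT => PP TT t)) with hQdef
    have hQc : IsFrameCongruence Q := frameCongGen_isCong _
    have hPPsub : ∀ t : GoodIdx TT, PP TT t ⊆ Q := fun t =>
      (Set.subset_sUnion_of_mem (Set.mem_range_self t)).trans (subset_frameCongGen _)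
    have hbd : ∀ t : GoodIdx TT, ((⊥ : L), t.1.2) ∈ Q := by
      intro t
      induction t using WellFounded.induction (grel_wf TT) with
      | _ t IH =>
      have he : ((⊥ : L), ee TT t) ∈ Q := by
        have hm := mem_iSup hQc (κ := {u : GoodIdx TT // grel TT u t})
          (fun u => (((⊥ : L), u.1.1.2) : L × L)) (fun u => IH u.1 u.2)
        have e1 : (⨆ _u : {u : GoodIdx TT // grel TT u t}, (⊥ : L)) = ⊥ := by simp
        have e2 : (⨆ u : {u : GoodIdx TT // grel TT u t}, u.1.1.2) = ee TT t := by
          rw [ee, iSup_subtype']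
        rw [e1, e2] at hm
        exact hm
      have hne : nabla (ee TT t) ⊆ Q := nabla_subset_of_bot_mem hQc he
      have hfin : nabla t.1.2 ⊆ Q := by
        have hsub : nabla t.1.2 ⊆
            frameCongGen ((nabla t.1.2 ∩ delta (ee TT t)) ∪ (nabla t.1.2 ∩ nabla (ee TT t))) := by
          intro p hp
          refine frame_law (nabla_isCong t.1.2) (delta_isCong (ee TT t))
            (nabla_isCong (ee TT t)) ⟨hp, ?_⟩
          rw [gen_delta_nabla (ee TT t)]
          trivial
        refine hsub.trans (frameCongGen_le hQc (Set.union_subset ?_ ?_))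
        · rintro p ⟨h1, h2⟩
          exact hPPsub t ⟨h2, h1⟩
        · rintro p ⟨_h1, h2⟩
          exact hne h2
      exact hfin (mem_bot_nabla t.1.2)
    have hbig := mem_iSup hQc (fun t : GoodIdx TT => (((⊥ : L), t.1.2) : L × L)) hbd
    have e1 : (⨆ _t : GoodIdx TT, (⊥ : L)) = ⊥ := by simp
    rw [e1] at hbig
    rw [← hEdef] at hbig
    rw [hEtop] at hbig
    exact eq_univ_of_bot_top hQc hbig
  · -- refinement
    rintro p ⟨t, rfl⟩
    obtain ⟨_hle, s, hsS, hmem⟩ := t.2.1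
    refine ⟨s, hsS, ?_⟩
    have h1 : PP TT t ⊆ delta t.1.1 ∩ nabla t.1.2 := by
      rintro q ⟨h1, h2⟩
      exact ⟨delta_anti (c_le_ee TT t) h1, h2⟩
    exact h1.trans (theta_subset (hS s hsS) hmem)
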